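/- Let ζ ∈ 𝕋² be a periodic point of T of prime period q and let τ > 0. Take s_n = √(τ/(πn)) and u_n = −log s_n, and set g(n) = ⌊(log n + log(λ^{2q}+1) − 2·log(2|λ|^q·√(τ/π)))/(2q·log|λ|)⌋. Then for all sufficiently large n, A_n^{(q)} ∩ T^{−j}(A_n^{(q)}) = ∅ for every 1 ≤ j ≤ q·g(n); in particular Σ_{j=1}^{q·g(n)} m(A_n^{(q)} ∩ T^{−j}(A_n^{(q)})) = 0. -/

import Mathlib

open MeasureTheory Filter Topology Set

noncomputable section

/-- The 2-torus ℝ²/ℤ², with its product (Haar/Lebesgue) probability measure. -/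
abbrev Torus2 := AddCircle (1 : ℝ) × AddCircle (1 : ℝ)

/-- Projection of a vector in the plane to the torus. -/
def torusProj (v : ℝ × ℝ) : Torus2 := (↑v.1, ↑v.2)

/-- The automorphism of the torus induced by an integer matrix `L`. -/
def anosovMap (L : Matrix (Fin 2) (Fin 2) ℤ) (z : Torus2) : Torus2 :=
  (L 0 0 • z.1 + L 0 1 • z.2, L 1 0 • z.1 + L 1 1 • z.2)

/-- The quotient metric on the torus induced by the Euclidean metric on the plane:
the infimum of the Euclidean norms of the representatives of `z - w`. -/
def dEuc (z w : Torus2) : ℝ :=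
  sInf {r | ∃ v : ℝ × ℝ, torusProj v = z - w ∧ r = Real.sqrt (v.1 ^ 2 + v.2 ^ 2)}

/-- `v` is an eigenvector of `L` (viewed as a real matrix) with eigenvalue `lam`. -/
def IsEigen (L : Matrix (Fin 2) (Fin 2) ℤ) (lam : ℝ) (v : ℝ × ℝ) : Prop :=
  v ≠ 0 ∧ (L 0 0 : ℝ) * v.1 + (L 0 1 : ℝ) * v.2 = lam * v.1
        ∧ (L 1 0 : ℝ) * v.1 + (L 1 1 : ℝ) * v.2 = lam * v.2

/-- `A_n^{(q)} = {X₀ > uₙ, X₁ ≤ uₙ, …, X_q ≤ uₙ}` with `X_i(x) = -log d(Tⁱx, ζ)`. -/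
def Aq (L : Matrix (Fin 2) (Fin 2) ℤ) (ζ : Torus2) (u : ℕ → ℝ) (q n : ℕ) :
    Set Torus2 :=
  {x | u n < -Real.log (dEuc x ζ) ∧
    ∀ i, 1 ≤ i → i ≤ q → -Real.log (dEuc ((anosovMap L)^[i] x) ζ) ≤ u n}


/-- Euclidean norm on ℝ × ℝ. -/
def nrm (v : ℝ × ℝ) : ℝ := Real.sqrt (v.1 ^ 2 + v.2 ^ 2)

lemma nrm_nonneg (v : ℝ × ℝ) : 0 ≤ nrm v := Real.sqrt_nonneg _

lemma nrm_zero : nrm (0 : ℝ × ℝ) = 0 := by simp [nrm]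

lemma nrm_sq (v : ℝ × ℝ) : nrm v ^ 2 = v.1 ^ 2 + v.2 ^ 2 :=
  Real.sq_sqrt (by positivity)

lemma nrm_eq_zero {v : ℝ × ℝ} (h : nrm v = 0) : v = 0 := by
  have h2 := nrm_sq v
  rw [h] at h2
  have h1 : v.1 = 0 := by nlinarith [sq_nonneg v.1, sq_nonneg v.2]
  have hb : v.2 = 0 := by nlinarith [sq_nonneg v.1, sq_nonneg v.2]
  exact Prod.ext h1 hb

lemma fst_le_nrm (v : ℝ × ℝ) : |v.1| ≤ nrm v := by
  rw [← Real.sqrt_sq_eq_abs]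
  exact Real.sqrt_le_sqrt (by nlinarith [sq_nonneg v.2])

lemma snd_le_nrm (v : ℝ × ℝ) : |v.2| ≤ nrm v := by
  rw [← Real.sqrt_sq_eq_abs]
  exact Real.sqrt_le_sqrt (by nlinarith [sq_nonneg v.1])

lemma nrm_add_le (v w : ℝ × ℝ) : nrm (v + w) ≤ nrm v + nrm w := by
  have cs : v.1 * w.1 + v.2 * w.2 ≤ nrm v * nrm w := by
    rcases le_or_gt (v.1 * w.1 + v.2 * w.2) 0 with h | h
    · exact h.trans (mul_nonneg (nrm_nonneg v) (nrm_nonneg w))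
    · have h2 : (v.1 * w.1 + v.2 * w.2) ^ 2 ≤ (nrm v * nrm w) ^ 2 := by
        rw [mul_pow, nrm_sq, nrm_sq]
        nlinarith [sq_nonneg (v.1 * w.2 - v.2 * w.1)]
      nlinarith [mul_nonneg (nrm_nonneg v) (nrm_nonneg w)]
  have hnn : 0 ≤ nrm v + nrm w := add_nonneg (nrm_nonneg v) (nrm_nonneg w)
  rw [nrm, show ((v+w).1)^2 + ((v+w).2)^2 = (v.1+w.1)^2+(v.2+w.2)^2 from rfl]
  rw [show nrm v + nrm w = Real.sqrt ((nrm v + nrm w)^2) from (Real.sqrt_sq hnn).symm]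
  apply Real.sqrt_le_sqrt
  have := nrm_sq v; have := nrm_sq w
  nlinarith [cs]

lemma nrm_smul (r : ℝ) (v : ℝ × ℝ) : nrm (r • v) = |r| * nrm v := by
  rw [nrm, show (r • v).1 = r * v.1 from rfl, show (r • v).2 = r * v.2 from rfl]
  rw [show (r*v.1)^2 + (r*v.2)^2 = r^2 * (v.1^2+v.2^2) by ring, Real.sqrt_mul (sq_nonneg r),
    Real.sqrt_sq_eq_abs]
  rfl

lemma nrm_neg (v : ℝ × ℝ) : nrm (-v) = nrm v := by
  have : -v = (-1 : ℝ) • v := by ext <;> simp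
  rw [this, nrm_smul]; simp

lemma nrm_sub_nrm_le (v w : ℝ × ℝ) : nrm v - nrm w ≤ nrm (v - w) := by
  have := nrm_add_le (v - w) w
  simp only [sub_add_cancel] at this
  linarith

/-- integer vectors -/
def IsIntVec (v : ℝ × ℝ) : Prop := (∃ a : ℤ, v.1 = a) ∧ (∃ b : ℤ, v.2 = b)

lemma torusProj_add (v w : ℝ × ℝ) : torusProj (v + w) = torusProj v + torusProj w := rfl

lemma torusProj_neg (v : ℝ × ℝ) : torusProj (-v) = -torusProj v := rfl

lemma torusProj_sub (v w : ℝ × ℝ) : torusProj (v - w) = torusProj v - torusProj w := rfl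

lemma torusProj_zero : torusProj (0 : ℝ × ℝ) = 0 := rfl

lemma torusProj_eq_zero_iff (v : ℝ × ℝ) : torusProj v = 0 ↔ IsIntVec v := by
  constructor
  · intro h
    have h1 : (↑v.1 : AddCircle (1:ℝ)) = 0 := congrArg Prod.fst h
    have h2 : (↑v.2 : AddCircle (1:ℝ)) = 0 := congrArg Prod.snd h
    rw [AddCircle.coe_eq_zero_iff] at h1 h2
    obtain ⟨a, ha⟩ := h1; obtain ⟨b, hb⟩ := h2
    exact ⟨⟨a, by simpa using ha.symm⟩, ⟨b, by simpa using hb.symm⟩⟩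
  · rintro ⟨⟨a, ha⟩, ⟨b, hb⟩⟩
    have h1 : (↑v.1 : AddCircle (1:ℝ)) = 0 := by
      rw [AddCircle.coe_eq_zero_iff]; exact ⟨a, by simp [ha]⟩
    have h2 : (↑v.2 : AddCircle (1:ℝ)) = 0 := by
      rw [AddCircle.coe_eq_zero_iff]; exact ⟨b, by simp [hb]⟩
    exact Prod.ext h1 h2

lemma torusProj_surjective : Function.Surjective torusProj := by
  intro z
  obtain ⟨a, ha⟩ := QuotientAddGroup.mk_surjective z.1
  obtain ⟨b, hb⟩ := QuotientAddGroup.mk_surjective z.2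
  exact ⟨(a, b), Prod.ext ha hb⟩

lemma intvec_nrm_ge_one {v : ℝ × ℝ} (hint : IsIntVec v) (hne : v ≠ 0) : 1 ≤ nrm v := by
  obtain ⟨⟨a, ha⟩, ⟨b, hb⟩⟩ := hint
  have hab : a ≠ 0 ∨ b ≠ 0 := by
    by_contra hc
    push_neg at hc
    exact hne (Prod.ext (by simp [ha, hc.1]) (by simp [hb, hc.2]))
  have h1 : (1:ℝ) ≤ v.1 ^ 2 + v.2 ^ 2 := by
    rcases hab with h | h
    · have h' : (1:ℤ) ≤ a^2 := by rcases h.lt_or_gt with h|h <;> nlinarith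
      have : (1:ℝ) ≤ (a:ℝ)^2 := by exact_mod_cast h'
      nlinarith [sq_nonneg v.2, ha ▸ this]
    · have h' : (1:ℤ) ≤ b^2 := by rcases h.lt_or_gt with h|h <;> nlinarith
      have : (1:ℝ) ≤ (b:ℝ)^2 := by exact_mod_cast h'
      nlinarith [sq_nonneg v.1, hb ▸ this]
  calc (1:ℝ) = Real.sqrt 1 := by simp
  _ ≤ nrm v := Real.sqrt_le_sqrt h1

/-- dEuc API -/
lemma dEuc_le_nrm {z w : Torus2} {v : ℝ × ℝ} (h : torusProj v = z - w) :
    dEuc z w ≤ nrm v := by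
  apply csInf_le
  · exact ⟨0, fun r ⟨v', _, hr⟩ => hr ▸ Real.sqrt_nonneg _⟩
  · exact ⟨v, h, rfl⟩

lemma dEuc_set_nonempty (z w : Torus2) :
    {r | ∃ v : ℝ × ℝ, torusProj v = z - w ∧ r = Real.sqrt (v.1 ^ 2 + v.2 ^ 2)}.Nonempty := by
  obtain ⟨v, hv⟩ := torusProj_surjective (z - w)
  exact ⟨_, v, hv, rfl⟩

lemma dEuc_nonneg (z w : Torus2) : 0 ≤ dEuc z w :=
  le_csInf (dEuc_set_nonempty z w) (fun r ⟨v', _, hr⟩ => hr ▸ Real.sqrt_nonneg _)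

lemma exists_lift_lt {z w : Torus2} {r : ℝ} (h : dEuc z w < r) :
    ∃ v : ℝ × ℝ, torusProj v = z - w ∧ nrm v < r := by
  obtain ⟨x, ⟨v, hv, hx⟩, hxr⟩ := exists_lt_of_csInf_lt (dEuc_set_nonempty z w) h
  exact ⟨v, hv, by rw [nrm, ← hx]; exact hxr⟩

lemma dEuc_self (z : Torus2) : dEuc z z = 0 := by
  refine le_antisymm ?_ (dEuc_nonneg z z)
  have := dEuc_le_nrm (z := z) (w := z) (v := 0) (by rw [torusProj_zero, sub_self])
  rwa [nrm_zero] at this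

lemma eq_of_dEuc_eq_zero {z w : Torus2} (h : dEuc z w = 0) : z = w := by
  have hlift : ∀ ε : ℝ, 0 < ε → ∃ v : ℝ × ℝ, torusProj v = z - w ∧ nrm v < ε := by
    intro ε hε; exact exists_lift_lt (h ▸ hε)
  obtain ⟨v₁, hv₁, hn₁⟩ := hlift (1/2) (by norm_num)
  have hv₁0 : v₁ = 0 := by
    by_contra hne
    have hpos : 0 < nrm v₁ := lt_of_le_of_ne (nrm_nonneg v₁) (fun hc => hne (nrm_eq_zero hc.symm))
    obtain ⟨v₂, hv₂, hn₂⟩ := hlift (nrm v₁) hpos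
    have hdiff : torusProj (v₁ - v₂) = 0 := by
      rw [torusProj_sub, hv₁, hv₂, sub_self]
    have hint : IsIntVec (v₁ - v₂) := (torusProj_eq_zero_iff _).mp hdiff
    have hne' : v₁ - v₂ ≠ 0 := by
      intro hc
      have : v₁ = v₂ := by rwa [sub_eq_zero] at hc
      rw [this] at hn₂; exact lt_irrefl _ hn₂
    have h1 := intvec_nrm_ge_one hint hne'
    have : nrm (v₁ - v₂) ≤ nrm v₁ + nrm v₂ := by
      have := nrm_add_le v₁ (-v₂)
      rwa [show v₁ + -v₂ = v₁ - v₂ from rfl, nrm_neg] at this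
    linarith
  rw [hv₁0, torusProj_zero] at hv₁
  exact sub_eq_zero.mp hv₁.symm

lemma dEuc_pos {z w : Torus2} (h : z ≠ w) : 0 < dEuc z w :=
  lt_of_le_of_ne (dEuc_nonneg z w) (fun hc => h (eq_of_dEuc_eq_zero hc.symm))

/-- the linear action on ℝ² -/
def mact (L : Matrix (Fin 2) (Fin 2) ℤ) (v : ℝ × ℝ) : ℝ × ℝ :=
  ((L 0 0 : ℝ) * v.1 + (L 0 1 : ℝ) * v.2, (L 1 0 : ℝ) * v.1 + (L 1 1 : ℝ) * v.2)

/-- the inverse linear action (valid when det L = 1) -/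
def minv (L : Matrix (Fin 2) (Fin 2) ℤ) (v : ℝ × ℝ) : ℝ × ℝ :=
  ((L 1 1 : ℝ) * v.1 - (L 0 1 : ℝ) * v.2, -(L 1 0 : ℝ) * v.1 + (L 0 0 : ℝ) * v.2)

lemma anosov_proj (L : Matrix (Fin 2) (Fin 2) ℤ) (v : ℝ × ℝ) :
    anosovMap L (torusProj v) = torusProj (mact L v) := by
  unfold anosovMap torusProj mact
  apply Prod.ext <;> simp only
  · show (L 0 0) • (↑v.1 : AddCircle (1:ℝ)) + (L 0 1) • (↑v.2 : AddCircle (1:ℝ)) = _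
    rw [show (L 0 0) • (↑v.1 : AddCircle (1:ℝ)) = ↑((L 0 0 : ℝ) * v.1) from by
        rw [← zsmul_eq_mul]; rfl,
      show (L 0 1) • (↑v.2 : AddCircle (1:ℝ)) = ↑((L 0 1 : ℝ) * v.2) from by
        rw [← zsmul_eq_mul]; rfl]
    rfl
  · show (L 1 0) • (↑v.1 : AddCircle (1:ℝ)) + (L 1 1) • (↑v.2 : AddCircle (1:ℝ)) = _
    rw [show (L 1 0) • (↑v.1 : AddCircle (1:ℝ)) = ↑((L 1 0 : ℝ) * v.1) from by
        rw [← zsmul_eq_mul]; rfl,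
      show (L 1 1) • (↑v.2 : AddCircle (1:ℝ)) = ↑((L 1 1 : ℝ) * v.2) from by
        rw [← zsmul_eq_mul]; rfl]
    rfl

lemma anosov_add (L : Matrix (Fin 2) (Fin 2) ℤ) (z w : Torus2) :
    anosovMap L (z + w) = anosovMap L z + anosovMap L w := by
  unfold anosovMap
  apply Prod.ext <;> simp only [Prod.fst_add, Prod.snd_add] <;>
    rw [smul_add, smul_add] <;> abel

lemma anosov_iter_add (L : Matrix (Fin 2) (Fin 2) ℤ) (j : ℕ) (z : Torus2) (v : ℝ × ℝ) :
    (anosovMap L)^[j] (z + torusProj v) = (anosovMap L)^[j] z + torusProj ((mact L)^[j] v) := by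
  induction j generalizing z v with
  | zero => simp
  | succ j ih =>
    rw [Function.iterate_succ_apply, anosov_add, anosov_proj, ih,
      Function.iterate_succ_apply, Function.iterate_succ_apply]

lemma mact_intvec (L : Matrix (Fin 2) (Fin 2) ℤ) {v : ℝ × ℝ} (h : IsIntVec v) :
    IsIntVec (mact L v) := by
  obtain ⟨⟨a, ha⟩, ⟨b, hb⟩⟩ := h
  exact ⟨⟨L 0 0 * a + L 0 1 * b, by simp only [mact, ha, hb]; push_cast; ring⟩,
    ⟨L 1 0 * a + L 1 1 * b, by simp only [mact, ha, hb]; push_cast; ring⟩⟩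

lemma minv_intvec (L : Matrix (Fin 2) (Fin 2) ℤ) {v : ℝ × ℝ} (h : IsIntVec v) :
    IsIntVec (minv L v) := by
  obtain ⟨⟨a, ha⟩, ⟨b, hb⟩⟩ := h
  exact ⟨⟨L 1 1 * a - L 0 1 * b, by simp only [minv, ha, hb]; push_cast; ring⟩,
    ⟨-(L 1 0) * a + L 0 0 * b, by simp only [minv, ha, hb]; push_cast; ring⟩⟩

lemma mact_sub (L : Matrix (Fin 2) (Fin 2) ℤ) (v w : ℝ × ℝ) :
    mact L (v - w) = mact L v - mact L w := by
  unfold mact; apply Prod.ext <;> simp <;> ring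

lemma det_cast {L : Matrix (Fin 2) (Fin 2) ℤ} (hdet : L.det = 1) :
    (L 0 0 : ℝ) * (L 1 1 : ℝ) - (L 0 1 : ℝ) * (L 1 0 : ℝ) = 1 := by
  rw [Matrix.det_fin_two] at hdet
  exact_mod_cast congrArg (Int.cast : ℤ → ℝ) hdet

lemma minv_mact {L : Matrix (Fin 2) (Fin 2) ℤ} (hdet : L.det = 1) (v : ℝ × ℝ) :
    minv L (mact L v) = v := by
  have h := det_cast hdet
  unfold minv mact
  apply Prod.ext <;> simp only
  · linear_combination v.1 * h
  · linear_combination v.2 * h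

lemma mact_minv {L : Matrix (Fin 2) (Fin 2) ℤ} (hdet : L.det = 1) (v : ℝ × ℝ) :
    mact L (minv L v) = v := by
  have h := det_cast hdet
  unfold minv mact
  apply Prod.ext <;> simp only
  · linear_combination v.1 * h
  · linear_combination v.2 * h

lemma mact_lin (L : Matrix (Fin 2) (Fin 2) ℤ) (c d : ℝ) (x y : ℝ × ℝ) :
    mact L (c • x + d • y) = c • mact L x + d • mact L y := by
  unfold mact
  apply Prod.ext <;> simp [Prod.smul_def, smul_eq_mul] <;> ring

lemma minv_lin (L : Matrix (Fin 2) (Fin 2) ℤ) (c d : ℝ) (x y : ℝ × ℝ) :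
    minv L (c • x + d • y) = c • minv L x + d • minv L y := by
  unfold minv
  apply Prod.ext <;> simp [Prod.smul_def, smul_eq_mul] <;> ring

lemma anosov_inj {L : Matrix (Fin 2) (Fin 2) ℤ} (hdet : L.det = 1) :
    Function.Injective (anosovMap L) := by
  intro z w h
  obtain ⟨a, ha⟩ := torusProj_surjective z
  obtain ⟨b, hb⟩ := torusProj_surjective w
  subst ha hb
  rw [anosov_proj, anosov_proj] at h
  have h0 : torusProj (mact L a - mact L b) = 0 := by
    rw [torusProj_sub, h, sub_self]
  rw [← mact_sub] at h0
  have hint : IsIntVec (minv L (mact L (a - b))) :=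
    minv_intvec L ((torusProj_eq_zero_iff _).mp h0)
  rw [minv_mact hdet] at hint
  have : torusProj (a - b) = 0 := (torusProj_eq_zero_iff _).mpr hint
  rw [torusProj_sub, sub_eq_zero] at this
  exact this

lemma exists_pos_lb (f : ℕ → ℝ) (Q : ℕ) (h : ∀ r, 1 ≤ r → r < Q → 0 < f r) :
    ∃ δ : ℝ, 0 < δ ∧ ∀ r, 1 ≤ r → r < Q → δ ≤ f r := by
  induction Q with
  | zero => exact ⟨1, one_pos, fun r h1 h2 => absurd h2 (by omega)⟩
  | succ Q ih =>
    obtain ⟨δ, hδ, hlb⟩ := ih (fun r h1 h2 => h r h1 (by omega))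
    rcases Nat.eq_zero_or_pos Q with hQ | hQ
    · exact ⟨1, one_pos, fun r h1 h2 => absurd (by omega : r < 1) (by omega)⟩
    · refine ⟨min δ (f Q), lt_min hδ (h Q hQ (by omega)), fun r h1 h2 => ?_⟩
      rcases Nat.lt_succ_iff_lt_or_eq.mp h2 with h3 | h3
      · exact le_trans (min_le_left _ _) (hlb r h1 h3)
      · exact h3 ▸ le_trans (min_le_right _ _) le_rfl

lemma nrm_combo_le (c d : ℝ) (x y : ℝ × ℝ) :
    nrm (c • x + d • y) ≤ |c| * nrm x + |d| * nrm y := by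
  calc nrm (c • x + d • y) ≤ nrm (c • x) + nrm (d • y) := nrm_add_le _ _
  _ = |c| * nrm x + |d| * nrm y := by rw [nrm_smul, nrm_smul]

/-- unstable coordinate w.r.t. basis eu, es -/
def coordA (eu es v : ℝ × ℝ) : ℝ :=
  (v.1 * es.2 - v.2 * es.1) / (eu.1 * es.2 - eu.2 * es.1)

/-- stable coordinate -/
def coordB (eu es v : ℝ × ℝ) : ℝ :=
  (eu.1 * v.2 - eu.2 * v.1) / (eu.1 * es.2 - eu.2 * es.1)

lemma prod_smul_fst (c : ℝ) (x : ℝ × ℝ) : (c • x).1 = c * x.1 := rfl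
lemma prod_smul_snd (c : ℝ) (x : ℝ × ℝ) : (c • x).2 = c * x.2 := rfl
lemma prod_add_fst (x y : ℝ × ℝ) : (x + y).1 = x.1 + y.1 := rfl
lemma prod_add_snd (x y : ℝ × ℝ) : (x + y).2 = x.2 + y.2 := rfl
lemma prod_sub_fst (x y : ℝ × ℝ) : (x - y).1 = x.1 - y.1 := rfl
lemma prod_sub_snd (x y : ℝ × ℝ) : (x - y).2 = x.2 - y.2 := rfl

lemma coordA_sub (eu es x y : ℝ × ℝ) :
    coordA eu es (x - y) = coordA eu es x - coordA eu es y := by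
  simp only [coordA, prod_sub_fst, prod_sub_snd]
  ring

lemma coordB_sub (eu es x y : ℝ × ℝ) :
    coordB eu es (x - y) = coordB eu es x - coordB eu es y := by
  simp only [coordB, prod_sub_fst, prod_sub_snd]
  ring

lemma coordA_combo {eu es : ℝ × ℝ} (hD : eu.1 * es.2 - eu.2 * es.1 ≠ 0) (c d : ℝ) :
    coordA eu es (c • eu + d • es) = c := by
  simp only [coordA, prod_smul_fst, prod_smul_snd, prod_add_fst, prod_add_snd]
  rw [div_eq_iff hD]
  ring

lemma coordB_combo {eu es : ℝ × ℝ} (hD : eu.1 * es.2 - eu.2 * es.1 ≠ 0) (c d : ℝ) :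
    coordB eu es (c • eu + d • es) = d := by
  simp only [coordB, prod_smul_fst, prod_smul_snd, prod_add_fst, prod_add_snd]
  field_simp
  ring

lemma coord_decomp {eu es : ℝ × ℝ} (hD : eu.1 * es.2 - eu.2 * es.1 ≠ 0) (v : ℝ × ℝ) :
    v = coordA eu es v • eu + coordB eu es v • es := by
  apply Prod.ext <;>
    simp only [coordA, coordB, prod_smul_fst, prod_smul_snd, prod_add_fst, prod_add_snd] <;>
    (rw [div_mul_eq_mul_div, div_mul_eq_mul_div, ← add_div, eq_div_iff hD]; ring)

lemma abs_cross_le (a b c d : ℝ) (v : ℝ × ℝ) (h1 : |a| ≤ nrm v) (h2 : |b| ≤ nrm v) :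
    |a * c - b * d| ≤ (|d| + |c|) * nrm v := by
  calc |a * c - b * d| ≤ |a * c| + |b * d| := by
        rw [sub_eq_add_neg]; exact (abs_add_le _ _).trans (by rw [abs_neg])
  _ = |a| * |c| + |b| * |d| := by rw [abs_mul, abs_mul]
  _ ≤ nrm v * |c| + nrm v * |d| := by
        have := abs_nonneg c; have := abs_nonneg d
        have := mul_le_mul_of_nonneg_right h1 (abs_nonneg c)
        have := mul_le_mul_of_nonneg_right h2 (abs_nonneg d)
        linarith
  _ = (|d| + |c|) * nrm v := by ring

lemma coordA_abs_le (eu es v : ℝ × ℝ) :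
    |coordA eu es v| ≤ ((|es.1| + |es.2|) / |eu.1 * es.2 - eu.2 * es.1|) * nrm v := by
  have hnum : |v.1 * es.2 - v.2 * es.1| ≤ (|es.1| + |es.2|) * nrm v :=
    abs_cross_le _ _ _ _ v (fst_le_nrm v) (snd_le_nrm v)
  rcases eq_or_lt_of_le (abs_nonneg (eu.1 * es.2 - eu.2 * es.1)) with h | h
  · rw [coordA, abs_div, ← h, div_zero, div_zero, zero_mul]
  · rw [coordA, abs_div, div_mul_eq_mul_div]
    exact (div_le_div_iff_of_pos_right h).mpr hnum

lemma coordB_abs_le (eu es v : ℝ × ℝ) :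
    |coordB eu es v| ≤ ((|eu.1| + |eu.2|) / |eu.1 * es.2 - eu.2 * es.1|) * nrm v := by
  have hnum : |eu.1 * v.2 - eu.2 * v.1| ≤ (|eu.1| + |eu.2|) * nrm v := by
    have := abs_cross_le v.2 v.1 eu.1 eu.2 v (snd_le_nrm v) (fst_le_nrm v)
    calc |eu.1 * v.2 - eu.2 * v.1| = |v.2 * eu.1 - v.1 * eu.2| := by ring_nf
    _ ≤ (|eu.2| + |eu.1|) * nrm v := this
    _ = (|eu.1| + |eu.2|) * nrm v := by ring
  rcases eq_or_lt_of_le (abs_nonneg (eu.1 * es.2 - eu.2 * es.1)) with h | h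
  · rw [coordB, abs_div, ← h, div_zero, div_zero, zero_mul]
  · rw [coordB, abs_div, div_mul_eq_mul_div]
    exact (div_le_div_iff_of_pos_right h).mpr hnum

section eigen

variable {L : Matrix (Fin 2) (Fin 2) ℤ} {lam : ℝ} {eu es : ℝ × ℝ}

lemma mact_eigen {v : ℝ × ℝ} {μ : ℝ} (h : IsEigen L μ v) : mact L v = μ • v :=
  Prod.ext h.2.1 h.2.2

lemma mact_smul (L : Matrix (Fin 2) (Fin 2) ℤ) (c : ℝ) (v : ℝ × ℝ) :
    mact L (c • v) = c • mact L v := by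
  have := mact_lin L c 0 v v
  simpa using this

lemma minv_smul (L : Matrix (Fin 2) (Fin 2) ℤ) (c : ℝ) (v : ℝ × ℝ) :
    minv L (c • v) = c • minv L v := by
  have := minv_lin L c 0 v v
  simpa using this

lemma minv_eigen {v : ℝ × ℝ} {μ : ℝ} (hdet : L.det = 1) (h : IsEigen L μ v) (hμ : μ ≠ 0) :
    minv L v = μ⁻¹ • v := by
  have h1 := minv_mact hdet v
  rw [mact_eigen h, minv_smul] at h1
  calc minv L v = (μ⁻¹ * μ) • minv L v := by rw [inv_mul_cancel₀ hμ, one_smul]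
  _ = μ⁻¹ • (μ • minv L v) := (smul_smul _ _ _).symm
  _ = μ⁻¹ • v := by rw [h1]

lemma eigen_indep (heu : IsEigen L lam eu) (hes : IsEigen L lam⁻¹ es) (hlam : 1 < |lam|) :
    eu.1 * es.2 - eu.2 * es.1 ≠ 0 := by
  intro hD
  have hlam0 : lam ≠ 0 := by intro h; rw [h, abs_zero] at hlam; linarith
  obtain ⟨c, hc⟩ : ∃ c : ℝ, es = c • eu := by
    by_cases h1 : eu.1 = 0
    · have h2 : eu.2 ≠ 0 := fun h => heu.1 (Prod.ext h1 h)
      refine ⟨es.2 / eu.2, Prod.ext ?_ ?_⟩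
      · rw [prod_smul_fst, h1, mul_zero]
        rw [h1] at hD
        have : eu.2 * es.1 = 0 := by linarith
        rcases mul_eq_zero.mp this with h | h
        · exact absurd h h2
        · exact h
      · rw [prod_smul_snd]
        field_simp
    · refine ⟨es.1 / eu.1, Prod.ext ?_ ?_⟩
      · rw [prod_smul_fst]; field_simp
      · rw [prod_smul_snd]
        field_simp
        nlinarith [hD]
  have hc0 : c ≠ 0 := by
    intro h; rw [h, zero_smul] at hc; exact hes.1 hc
  have h1 : mact L es = (lam⁻¹ * c) • eu := by
    rw [mact_eigen hes, hc, smul_smul]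
  have h2 : mact L es = (c * lam) • eu := by
    rw [hc, mact_smul, mact_eigen heu, smul_smul]
  rw [h2] at h1
  have h3 : (c * lam - lam⁻¹ * c) • eu = (0 : ℝ × ℝ) := by
    rw [sub_smul, h1, sub_self]
  rcases smul_eq_zero.mp h3 with h | h
  · have h5 : lam ^ 2 = 1 := by
      have h7 := sub_eq_zero.mp h
      field_simp at h7
      have h6 : c * (lam ^ 2 - 1) = 0 := by rw [h7]; ring
      rcases mul_eq_zero.mp h6 with h8 | h8
      · exact absurd h8 hc0
      · have := sub_eq_zero.mp h8; linarith
    have : |lam| ^ 2 = 1 := by rw [← abs_pow, h5, abs_one]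
    nlinarith [hlam, abs_nonneg lam]
  · exact heu.1 h

lemma mact_iter_formula (heu : IsEigen L lam eu) (hes : IsEigen L lam⁻¹ es)
    (hD : eu.1 * es.2 - eu.2 * es.1 ≠ 0) (k : ℕ) (v : ℝ × ℝ) :
    (mact L)^[k] v = (lam ^ k * coordA eu es v) • eu + ((lam⁻¹) ^ k * coordB eu es v) • es := by
  induction k with
  | zero => simpa using coord_decomp hD v
  | succ k ih =>
    rw [Function.iterate_succ_apply', ih, mact_lin, mact_eigen heu, mact_eigen hes,
      smul_smul, smul_smul]
    congr 1
    · congr 1; ring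
    · congr 1; ring

lemma minv_iter_formula (hdet : L.det = 1) (heu : IsEigen L lam eu) (hes : IsEigen L lam⁻¹ es)
    (hD : eu.1 * es.2 - eu.2 * es.1 ≠ 0) (hlam0 : lam ≠ 0) (k : ℕ) (v : ℝ × ℝ) :
    (minv L)^[k] v = ((lam⁻¹) ^ k * coordA eu es v) • eu + (lam ^ k * coordB eu es v) • es := by
  have hNu : minv L eu = lam⁻¹ • eu := minv_eigen hdet heu hlam0
  have hNs : minv L es = lam • es := by
    have := minv_eigen hdet hes (inv_ne_zero hlam0)
    rwa [inv_inv] at this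
  induction k with
  | zero => simpa using coord_decomp hD v
  | succ k ih =>
    rw [Function.iterate_succ_apply', ih, minv_lin, hNu, hNs, smul_smul, smul_smul]
    congr 1
    · congr 1; ring
    · congr 1; ring

lemma mact_iter_minv_iter (hdet : L.det = 1) (N : ℕ) (w : ℝ × ℝ) :
    (mact L)^[N] ((minv L)^[N] w) = w := by
  induction N with
  | zero => rfl
  | succ N ih =>
    rw [Function.iterate_succ_apply' (minv L), Function.iterate_succ_apply (mact L),
      mact_minv hdet, ih]

lemma mact_zero (L : Matrix (Fin 2) (Fin 2) ℤ) : mact L 0 = 0 := by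
  unfold mact; simp

lemma minv_iter_intvec (L : Matrix (Fin 2) (Fin 2) ℤ) (N : ℕ) {v : ℝ × ℝ} (h : IsIntVec v) :
    IsIntVec ((minv L)^[N] v) := by
  induction N with
  | zero => exact h
  | succ N ih => rw [Function.iterate_succ_apply']; exact minv_intvec L ih

end eigen

lemma anosov_iter_proj (L : Matrix (Fin 2) (Fin 2) ℤ) (m : ℕ) (w : ℝ × ℝ) :
    (anosovMap L)^[m] (torusProj w) = torusProj ((mact L)^[m] w) := by
  have h0 : anosovMap L 0 = 0 := by
    unfold anosovMap; simp
  have h1 := anosov_iter_add L m 0 w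
  rwa [zero_add, Function.iterate_fixed h0 m, zero_add] at h1

lemma anosov_sub (L : Matrix (Fin 2) (Fin 2) ℤ) (z w : Torus2) :
    anosovMap L (z - w) = anosovMap L z - anosovMap L w := by
  unfold anosovMap
  apply Prod.ext <;> simp only [Prod.fst_sub, Prod.snd_sub] <;>
    rw [smul_sub, smul_sub] <;> abel

lemma anosov_iter_sub (L : Matrix (Fin 2) (Fin 2) ℤ) (m : ℕ) (z w : Torus2) :
    (anosovMap L)^[m] (z - w) = (anosovMap L)^[m] z - (anosovMap L)^[m] w := by
  induction m with
  | zero => rfl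
  | succ m ih => rw [Function.iterate_succ_apply', ih, anosov_sub,
      Function.iterate_succ_apply', Function.iterate_succ_apply']

lemma lt_s_of_lt_neg_log {d sn un : ℝ} (hsn : 0 < sn) (hun : un = -Real.log sn)
    (hupos : 0 < un) (hd : 0 ≤ d) (h : un < -Real.log d) : d < sn := by
  rcases eq_or_lt_of_le hd with h0 | h0
  · rw [← h0] at h ⊢
    exact hsn
  · have hlog : Real.log d < Real.log sn := by rw [hun] at h; linarith
    calc d = Real.exp (Real.log d) := (Real.exp_log h0).symm
    _ < Real.exp (Real.log sn) := Real.exp_lt_exp.mpr hlog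
    _ = sn := Real.exp_log hsn

lemma s_le_of_neg_log_le {d sn un : ℝ} (hsn : 0 < sn) (hun : un = -Real.log sn)
    (hd : 0 < d) (h : -Real.log d ≤ un) : sn ≤ d := by
  have hlog : Real.log sn ≤ Real.log d := by rw [hun] at h; linarith
  calc sn = Real.exp (Real.log sn) := (Real.exp_log hsn).symm
  _ ≤ Real.exp (Real.log d) := Real.exp_le_exp.mpr hlog
  _ = d := Real.exp_log hd

set_option maxHeartbeats 2000000 in
/-- at a periodic point of prime period `q`, with
`sₙ = √(τ/(πn))`, `uₙ = -log sₙ` and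
`g(n) = ⌊(log n + log(λ^{2q}+1) − 2log(2|λ|^q√(τ/π)))/(2q log|λ|)⌋`, for all
sufficiently large `n` one has `A_n^{(q)} ∩ T^{-j}A_n^{(q)} = ∅` for
`1 ≤ j ≤ q·g(n)`; in particular the corresponding sum of measures vanishes. -/
theorem no_short_returns_periodic
    (L : Matrix (Fin 2) (Fin 2) ℤ) (hdet : L.det = 1)
    (lam : ℝ) (hlam : 1 < |lam|)
    (eu es : ℝ × ℝ) (heu : IsEigen L lam eu) (hes : IsEigen L lam⁻¹ es)
    (ζ : Torus2) (q : ℕ) (hq : 1 ≤ q)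
    (hper : (anosovMap L)^[q] ζ = ζ)
    (hprime : ∀ j : ℕ, 1 ≤ j → j < q → (anosovMap L)^[j] ζ ≠ ζ)
    (τ : ℝ) (hτ : 0 < τ)
    (s : ℕ → ℝ) (hs : ∀ n : ℕ, s n = Real.sqrt (τ / (Real.pi * n)))
    (u : ℕ → ℝ) (hu : ∀ n : ℕ, u n = -Real.log (s n))
    (g : ℕ → ℤ)
    (hg : ∀ n : ℕ, g n = ⌊(Real.log n + Real.log (lam ^ (2 * q) + 1) -
        2 * Real.log (2 * |lam| ^ q * Real.sqrt (τ / Real.pi))) /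
        (2 * q * Real.log |lam|)⌋) :
    ∀ᶠ n : ℕ in atTop,
      (∀ j : ℕ, 1 ≤ j → (j : ℤ) ≤ q * g n →
        Aq L ζ u q n ∩ (anosovMap L)^[j] ⁻¹' Aq L ζ u q n = ∅) ∧
      ∑ j ∈ Finset.Icc 1 (q * (g n).toNat),
        (volume (Aq L ζ u q n ∩ (anosovMap L)^[j] ⁻¹' Aq L ζ u q n)).toReal = 0 := by
  -- basic constants
  have hq0 : 0 < q := hq
  have hlam0 : lam ≠ 0 := by intro h; rw [h, abs_zero] at hlam; linarith
  have habs_pos : (0:ℝ) < |lam| := lt_trans one_pos hlam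
  have hD : eu.1 * es.2 - eu.2 * es.1 ≠ 0 := eigen_indep heu hes hlam
  set Ca := (|es.1| + |es.2|) / |eu.1 * es.2 - eu.2 * es.1| with hCa
  set Cb := (|eu.1| + |eu.2|) / |eu.1 * es.2 - eu.2 * es.1| with hCb
  have hCa0 : 0 ≤ Ca := by rw [hCa]; positivity
  have hCb0 : 0 ≤ Cb := by rw [hCb]; positivity
  have hl2q : (0:ℝ) < lam ^ (2*q) := by
    rw [pow_mul]
    exact pow_pos (by positivity) q
  set K2 := (lam ^ (2*q) + 1) / (4 * lam ^ (2*q)) with hK2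
  set Kb := Real.sqrt K2 with hKb
  have hKb0 : 0 ≤ Kb := Real.sqrt_nonneg _
  set A := Ca * (1 + Kb) with hA
  have hA0 : 0 ≤ A := by rw [hA]; positivity
  -- δ
  obtain ⟨δ, hδpos, hδ⟩ := exists_pos_lb
    (fun r => dEuc ((anosovMap L)^[r] ζ - ζ) 0) q
    (fun r h1 h2 => dEuc_pos (sub_ne_zero.mpr (hprime r h1 h2)))
  set δ' := min δ 1 with hδ'def
  have hδ'pos : 0 < δ' := lt_min hδpos one_pos
  -- N₀
  have hinv_lt : |lam|⁻¹ < 1 := inv_lt_one_of_one_lt₀ hlam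
  have hinv_nonneg : (0:ℝ) ≤ |lam|⁻¹ := inv_nonneg.mpr (abs_nonneg lam)
  obtain ⟨N₀, hN₀⟩ : ∃ N₀ : ℕ, (|lam|⁻¹) ^ N₀ * (A * nrm eu) < δ' / 2 := by
    have hae : (0:ℝ) ≤ A * nrm eu := mul_nonneg hA0 (nrm_nonneg eu)
    obtain ⟨N₀, hN⟩ := exists_pow_lt_of_lt_one
      (show (0:ℝ) < δ'/2/(A * nrm eu + 1) by positivity) hinv_lt
    refine ⟨N₀, ?_⟩
    have h3 : (|lam|⁻¹)^N₀ * (A * nrm eu + 1) < δ'/2 := by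
      have := (lt_div_iff₀ (show (0:ℝ) < A * nrm eu + 1 by positivity)).mp hN
      linarith
    nlinarith [pow_nonneg hinv_nonneg N₀]
  set M := q * N₀ with hM
  have hMbound : (|lam|⁻¹) ^ M * (A * nrm eu) < δ' / 2 := by
    have h1 : (|lam|⁻¹)^M ≤ (|lam|⁻¹)^N₀ :=
      pow_le_pow_of_le_one hinv_nonneg hinv_lt.le (Nat.le_mul_of_pos_left N₀ hq0)
    have hae : (0:ℝ) ≤ A * nrm eu := mul_nonneg hA0 (nrm_nonneg eu)
    nlinarith
  -- tendsto s → 0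
  have hstend : Tendsto s atTop (𝓝 0) := by
    rw [show s = fun n : ℕ => Real.sqrt (τ / (Real.pi * n)) from funext hs]
    have h0 : Tendsto (fun n : ℕ => Real.pi * n) atTop atTop :=
      Tendsto.const_mul_atTop Real.pi_pos tendsto_natCast_atTop_atTop
    have h1 : Tendsto (fun n : ℕ => τ / (Real.pi * n)) atTop (𝓝 0) :=
      Tendsto.div_atTop tendsto_const_nhds h0
    have h2 : Tendsto Real.sqrt (𝓝 0) (𝓝 0) := by
      have := Real.continuous_sqrt.tendsto 0
      rwa [Real.sqrt_zero] at this
    exact h2.comp h1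
  have hev4 : Tendsto (fun n : ℕ => |lam| ^ M * (2 * Cb * nrm es) * s n) atTop (𝓝 0) := by
    have := hstend.const_mul (|lam| ^ M * (2 * Cb * nrm es))
    simpa using this
  filter_upwards [eventually_ge_atTop 1,
    hstend.eventually_lt_const one_pos,
    hev4.eventually_lt_const (half_pos hδ'pos)] with n hn1 hn2 hn4
  -- per-n basics
  have hnpos : (0:ℝ) < n := by exact_mod_cast Nat.lt_of_lt_of_le Nat.zero_lt_one hn1
  have hsn_pos : 0 < s n := by rw [hs]; exact Real.sqrt_pos.mpr (by positivity)
  have hsn2 : s n ^ 2 = τ / (Real.pi * n) := by rw [hs]; exact Real.sq_sqrt (by positivity)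
  have hupos : 0 < u n := by
    rw [hu]; have := Real.log_neg hsn_pos hn2; linarith
  have key : ∀ j : ℕ, 1 ≤ j → (j:ℤ) ≤ q * g n →
      Aq L ζ u q n ∩ (anosovMap L)^[j] ⁻¹' Aq L ζ u q n = ∅ := by
    intro j hj1 hj2
    rw [Set.eq_empty_iff_forall_notMem]
    intro x hx
    obtain ⟨hxA, hxj'⟩ := hx
    have hxj : (anosovMap L)^[j] x ∈ Aq L ζ u q n := hxj'
    obtain ⟨hx0, hxi⟩ := hxA
    obtain ⟨hj0, hji⟩ := hxj
    -- G
    have hgn1 : 1 ≤ g n := by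
      by_contra hcon
      push_neg at hcon
      have hq' : (0:ℤ) ≤ (q:ℤ) := Int.natCast_nonneg q
      have h1 : (q:ℤ) * g n ≤ 0 := mul_nonpos_of_nonneg_of_nonpos hq' (by omega)
      have h2 : (1:ℤ) ≤ (j:ℤ) := by exact_mod_cast hj1
      linarith [hj2]
    set G := (g n).toNat with hG
    have hGg : (G:ℤ) = g n := Int.toNat_of_nonneg (by omega)
    have hjqG : j ≤ q * G := by
      have h1 : (j:ℤ) ≤ (q:ℤ) * G := by rw [hGg]; exact hj2
      exact_mod_cast h1
    -- the analytic bound |lam|^(qG) * s n ≤ Kb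
    have hKbb : |lam| ^ (q*G) * s n ≤ Kb := by
      have hlogpos : 0 < Real.log |lam| := Real.log_pos hlam
      set E := Real.log n + Real.log (lam ^ (2*q) + 1) -
          2 * Real.log (2 * |lam| ^ q * Real.sqrt (τ / Real.pi)) with hE
      have hdenpos : (0:ℝ) < 2*q*Real.log |lam| := by
        have : (0:ℝ) < (q:ℝ) := by exact_mod_cast hq0
        positivity
      have hfloor : ((g n : ℤ) : ℝ) ≤ E / (2*q*Real.log |lam|) := by
        rw [hg n]; exact Int.floor_le _
      have hGE : (G:ℝ) * (2*q*Real.log |lam|) ≤ E := by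
        have h1 : ((G:ℕ):ℝ) ≤ E / (2*q*Real.log |lam|) := by
          have : ((G:ℕ):ℝ) = ((g n : ℤ):ℝ) := by exact_mod_cast congrArg (Int.cast : ℤ → ℝ) hGg
          rw [this]; exact hfloor
        calc (G:ℝ) * (2*q*Real.log |lam|)
            ≤ (E / (2*q*Real.log |lam|)) * (2*q*Real.log |lam|) :=
              mul_le_mul_of_nonneg_right h1 hdenpos.le
        _ = E := div_mul_cancel₀ _ hdenpos.ne'
      have hexp : |lam| ^ (2*(q*G)) ≤ Real.exp E := by
        have h1 : |lam| ^ (2*(q*G)) = Real.exp ((2*(q*G) : ℕ) * Real.log |lam|) := by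
          rw [← Real.log_pow, Real.exp_log (by positivity)]
        rw [h1]
        apply Real.exp_le_exp.mpr
        calc ((2*(q*G):ℕ):ℝ) * Real.log |lam| = (G:ℝ) * (2*q*Real.log |lam|) := by
              push_cast; ring
        _ ≤ E := hGE
      have hl2q1 : (0:ℝ) < lam ^ (2*q) + 1 := by linarith
      have hsqrtpos : (0:ℝ) < Real.sqrt (τ / Real.pi) :=
        Real.sqrt_pos.mpr (by positivity)
      have habs2q : |lam| ^ (2*q) = lam ^ (2*q) := by
        rw [← abs_pow]; exact abs_of_nonneg hl2q.le
      have hexpE : Real.exp E = (n * (lam^(2*q)+1)) / (4 * lam^(2*q) * (τ/Real.pi)) := by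
        rw [hE, Real.exp_sub, Real.exp_add, Real.exp_log hnpos, Real.exp_log hl2q1]
        have h2 : Real.exp (2*Real.log (2*|lam|^q*Real.sqrt (τ/Real.pi)))
            = (2*|lam|^q*Real.sqrt (τ/Real.pi))^2 := by
          rw [show (2:ℝ)*Real.log (2*|lam|^q*Real.sqrt (τ/Real.pi))
              = Real.log ((2*|lam|^q*Real.sqrt (τ/Real.pi))^2) from by
                rw [Real.log_pow]; push_cast; ring]
          exact Real.exp_log (by positivity)
        rw [h2]
        have h3 : (2*|lam|^q*Real.sqrt (τ/Real.pi))^2 = 4 * lam^(2*q) * (τ/Real.pi) := by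
          rw [mul_pow, mul_pow, Real.sq_sqrt (by positivity : (0:ℝ) ≤ τ/Real.pi),
            ← pow_mul, show q*2 = 2*q from by ring, habs2q]
          ring
        rw [h3]
      have hsq : (|lam|^(q*G) * s n)^2 ≤ K2 := by
        have h1 : (|lam|^(q*G))^2 = |lam|^(2*(q*G)) := by
          rw [← pow_mul, show (q*G)*2 = 2*(q*G) from by ring]
        have h2 : (|lam|^(q*G) * s n)^2 = |lam|^(2*(q*G)) * (s n)^2 := by
          rw [mul_pow, h1]
        rw [h2, hsn2]
        calc |lam|^(2*(q*G)) * (τ/(Real.pi*n)) ≤ Real.exp E * (τ/(Real.pi*n)) :=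
              mul_le_mul_of_nonneg_right hexp (by positivity)
        _ = K2 := by
            rw [hexpE, hK2]
            field_simp
      calc |lam|^(q*G) * s n = Real.sqrt ((|lam|^(q*G) * s n)^2) :=
            (Real.sqrt_sq (by positivity)).symm
      _ ≤ Real.sqrt K2 := Real.sqrt_le_sqrt hsq
    -- distances and lifts
    have hdx : dEuc x ζ < s n :=
      lt_s_of_lt_neg_log hsn_pos (hu n) hupos (dEuc_nonneg _ _) hx0
    obtain ⟨y, hy, hyn⟩ := exists_lift_lt hdx
    have hx_eq : x = ζ + torusProj y := by rw [hy]; abel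
    have hTj : ∀ m : ℕ, (anosovMap L)^[m] x
        = (anosovMap L)^[m] ζ + torusProj ((mact L)^[m] y) := by
      intro m; rw [hx_eq]; exact anosov_iter_add L m ζ y
    have hperk : ∀ k : ℕ, (anosovMap L)^[q*k] ζ = ζ := by
      intro k; induction k with
      | zero => simp
      | succ k ih => rw [Nat.mul_succ, Function.iterate_add_apply, hper, ih]
    set r := j % q with hr
    set k := j / q with hk
    have hrq : r < q := Nat.mod_lt _ hq0
    have hjr : j = r + q * k := by rw [hr, hk]; rw [Nat.add_comm]; exact (Nat.div_add_mod j q).symm ▸ by omega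
    have hTjζ : (anosovMap L)^[j] ζ = (anosovMap L)^[r] ζ := by
      rw [hjr, Function.iterate_add_apply, hperk]
    have hdj : dEuc ((anosovMap L)^[j] x) ζ < s n :=
      lt_s_of_lt_neg_log hsn_pos (hu n) hupos (dEuc_nonneg _ _) hj0
    obtain ⟨v, hv, hvn⟩ := exists_lift_lt hdj
    set p := v - (mact L)^[j] y with hp_def
    have hp : torusProj p = (anosovMap L)^[r] ζ - ζ := by
      rw [hp_def, torusProj_sub, hv, hTj j, hTjζ]; abel
    by_cases hp0 : p = 0
    · -- p = 0 : j is a multiple of q, use the expansion recurrence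
      have hr0 : r = 0 := by
        by_contra hrne
        refine hprime r (by omega) hrq ?_
        have h1 := hp
        rw [hp0, torusProj_zero] at h1
        exact sub_eq_zero.mp h1.symm
      have hveq : v = (mact L)^[j] y := by
        have := hp0; rw [hp_def, sub_eq_zero] at this; exact this
      have hk1 : 1 ≤ k := by
        rcases Nat.eq_zero_or_pos k with h | h
        · rw [hjr, hr0, h, Nat.mul_zero] at hj1; simp at hj1
        · exact h
      have hXq := hxi q hq le_rfl
      rcases eq_or_lt_of_le (dEuc_nonneg ((anosovMap L)^[q] x) ζ) with hdq0 | hdqpos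
      · -- T^q x = ζ exactly
        have hTqx : (anosovMap L)^[q] x = ζ := eq_of_dEuc_eq_zero hdq0.symm
        have hTjx : (anosovMap L)^[j] x = ζ := by
          obtain ⟨k', hkk'⟩ : ∃ k', k = k' + 1 := ⟨k - 1, by omega⟩
          rw [hjr, hr0, Nat.zero_add, hkk',
            show q * (k'+1) = q*k' + q from by ring,
            Function.iterate_add_apply, hTqx, hperk]
        rw [hTjx, dEuc_self, Real.log_zero, neg_zero] at hj0
        linarith
      · have hw1 : s n ≤ nrm ((mact L)^[q] y) := by
          have h1 : s n ≤ dEuc ((anosovMap L)^[q] x) ζ :=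
            s_le_of_neg_log_le hsn_pos (hu n) hdqpos hXq
          have h2 : torusProj ((mact L)^[q] y) = (anosovMap L)^[q] x - ζ := by
            rw [hTj q, hper]; abel
          exact h1.trans (dEuc_le_nrm h2)
        have hCH : ∀ w : ℝ × ℝ, (mact L)^[2*q] w
            = (lam^q + (lam⁻¹)^q) • (mact L)^[q] w - w := by
          intro w
          have hdec := coord_decomp hD w
          rw [mact_iter_formula heu hes hD (2*q) w, mact_iter_formula heu hes hD q w]
          set X := coordA eu es w with hX
          set Y := coordB eu es w with hY
          conv_rhs => rw [hdec]
          have hP : lam^q * (lam⁻¹)^q = 1 := by rw [← mul_pow, mul_inv_cancel₀ hlam0, one_pow]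
          apply Prod.ext <;>
            simp only [prod_add_fst, prod_add_snd, prod_sub_fst, prod_sub_snd,
              prod_smul_fst, prod_smul_snd]
          · linear_combination (-(X * eu.1 + Y * es.1)) * hP
          · linear_combination (-(X * eu.2 + Y * es.2)) * hP
        have hrec : ∀ m : ℕ, s n ≤ nrm ((mact L)^[q*(m+1)] y) ∧
            nrm ((mact L)^[q*m] y) ≤ nrm ((mact L)^[q*(m+1)] y) := by
          intro m; induction m with
          | zero =>
            constructor
            · rw [Nat.mul_one]; exact hw1
            · rw [Nat.mul_zero, Nat.mul_one]
              exact le_trans hyn.le hw1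
          | succ m ih =>
            obtain ⟨ih1, ih2⟩ := ih
            have hid : (mact L)^[q*(m+2)] y
                = (lam^q + (lam⁻¹)^q) • (mact L)^[q*(m+1)] y - (mact L)^[q*m] y := by
              have h1 := hCH ((mact L)^[q*m] y)
              rw [← Function.iterate_add_apply, ← Function.iterate_add_apply] at h1
              rw [show 2*q + q*m = q*(m+2) from by ring,
                show q + q*m = q*(m+1) from by ring] at h1
              exact h1
            have ht2 : 2 ≤ |lam^q + (lam⁻¹)^q| := by
              have hprod : lam^q * (lam⁻¹)^q = 1 := by
                rw [← mul_pow, mul_inv_cancel₀ hlam0, one_pow]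
              have hsqt : (lam^q + (lam⁻¹)^q)^2 ≥ 4 := by
                nlinarith [sq_nonneg (lam^q - (lam⁻¹)^q)]
              rcases le_or_gt 0 (lam^q + (lam⁻¹)^q) with h | h
              · rw [abs_of_nonneg h]; nlinarith
              · rw [abs_of_neg h]; nlinarith
            have htri : |lam^q + (lam⁻¹)^q| * nrm ((mact L)^[q*(m+1)] y)
                - nrm ((mact L)^[q*m] y) ≤ nrm ((mact L)^[q*(m+2)] y) := by
              rw [hid]
              have h1 := nrm_add_le
                ((lam^q + (lam⁻¹)^q) • (mact L)^[q*(m+1)] y - (mact L)^[q*m] y)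
                ((mact L)^[q*m] y)
              rw [sub_add_cancel, nrm_smul] at h1
              linarith
            have hmul : 2 * nrm ((mact L)^[q*(m+1)] y)
                ≤ |lam^q + (lam⁻¹)^q| * nrm ((mact L)^[q*(m+1)] y) :=
              mul_le_mul_of_nonneg_right ht2 (nrm_nonneg _)
            constructor
            · show s n ≤ nrm ((mact L)^[q*(m+1+1)] y)
              rw [show m+1+1 = m+2 from rfl]
              linarith
            · show nrm ((mact L)^[q*(m+1)] y) ≤ nrm ((mact L)^[q*(m+1+1)] y)
              rw [show m+1+1 = m+2 from rfl]
              linarith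
        obtain ⟨m', hkm'⟩ : ∃ m', k = m' + 1 := ⟨k - 1, by omega⟩
        have hlow := (hrec m').1
        rw [← hkm'] at hlow
        rw [hveq, hjr, hr0, Nat.zero_add] at hvn
        linarith
    · -- p ≠ 0 : use the backward iteration
      have hCoordAj : coordA eu es ((mact L)^[j] y) = lam^j * coordA eu es y := by
        rw [mact_iter_formula heu hes hD j y, coordA_combo hD]
      have hCoordBj : coordB eu es ((mact L)^[j] y) = (lam⁻¹)^j * coordB eu es y := by
        rw [mact_iter_formula heu hes hD j y, coordB_combo hD]
      have hay : |coordA eu es y| ≤ Ca * s n :=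
        (coordA_abs_le eu es y).trans (mul_le_mul_of_nonneg_left hyn.le hCa0)
      have hav : |coordA eu es v| ≤ Ca * s n :=
        (coordA_abs_le eu es v).trans (mul_le_mul_of_nonneg_left hvn.le hCa0)
      have hby : |coordB eu es y| ≤ Cb * s n :=
        (coordB_abs_le eu es y).trans (mul_le_mul_of_nonneg_left hyn.le hCb0)
      have hbv : |coordB eu es v| ≤ Cb * s n :=
        (coordB_abs_le eu es v).trans (mul_le_mul_of_nonneg_left hvn.le hCb0)
      have hap : |coordA eu es p| ≤ A := by
        rw [hp_def, coordA_sub, hCoordAj]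
        have h1 : |coordA eu es v - lam^j * coordA eu es y|
            ≤ |coordA eu es v| + |lam^j * coordA eu es y| := by
          rw [sub_eq_add_neg]
          exact (abs_add_le _ _).trans (by rw [abs_neg])
        have h2 : |lam^j * coordA eu es y| = |lam|^j * |coordA eu es y| := by
          rw [abs_mul, abs_pow]
        have h3 : |lam|^j ≤ |lam|^(q*G) := pow_le_pow_right₀ hlam.le hjqG
        have h4 : |lam|^j * |coordA eu es y| ≤ |lam|^(q*G) * (Ca * s n) :=
          mul_le_mul h3 hay (abs_nonneg _) (by positivity)
        have h5 : |lam|^(q*G) * (Ca * s n) = Ca * (|lam|^(q*G) * s n) := by ring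
        have h6 : Ca * (|lam|^(q*G) * s n) ≤ Ca * Kb :=
          mul_le_mul_of_nonneg_left hKbb hCa0
        have h7 : Ca * s n ≤ Ca * 1 := mul_le_mul_of_nonneg_left hn2.le hCa0
        rw [hA]
        calc |coordA eu es v - lam^j * coordA eu es y|
            ≤ |coordA eu es v| + |lam^j * coordA eu es y| := h1
        _ ≤ Ca * s n + |lam|^(q*G) * (Ca * s n) := by rw [h2]; linarith
        _ ≤ Ca * 1 + Ca * Kb := by rw [h5] at *; linarith
        _ = Ca * (1 + Kb) := by ring
      have hbp : |coordB eu es p| ≤ 2 * Cb * s n := by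
        rw [hp_def, coordB_sub, hCoordBj]
        have h1 : |coordB eu es v - (lam⁻¹)^j * coordB eu es y|
            ≤ |coordB eu es v| + |(lam⁻¹)^j * coordB eu es y| := by
          rw [sub_eq_add_neg]
          exact (abs_add_le _ _).trans (by rw [abs_neg])
        have h2 : |(lam⁻¹)^j * coordB eu es y| = (|lam|⁻¹)^j * |coordB eu es y| := by
          rw [abs_mul, abs_pow, abs_inv]
        have h3 : (|lam|⁻¹)^j ≤ 1 := pow_le_one₀ hinv_nonneg hinv_lt.le
        have h4 : (|lam|⁻¹)^j * |coordB eu es y| ≤ 1 * (Cb * s n) :=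
          mul_le_mul h3 hby (abs_nonneg _) one_pos.le
        calc |coordB eu es v - (lam⁻¹)^j * coordB eu es y|
            ≤ |coordB eu es v| + |(lam⁻¹)^j * coordB eu es y| := h1
        _ ≤ Cb * s n + 1 * (Cb * s n) := by rw [h2]; linarith
        _ = 2 * Cb * s n := by ring
      -- upper bound for the backward iterate
      have hupper : nrm ((minv L)^[M] p) < δ' := by
        rw [minv_iter_formula hdet heu hes hD hlam0 M p]
        have h1 := nrm_combo_le ((lam⁻¹)^M * coordA eu es p)
          (lam^M * coordB eu es p) eu es
        have h2 : |(lam⁻¹)^M * coordA eu es p| = (|lam|⁻¹)^M * |coordA eu es p| := by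
          rw [abs_mul, abs_pow, abs_inv]
        have h3 : |lam^M * coordB eu es p| = |lam|^M * |coordB eu es p| := by
          rw [abs_mul, abs_pow]
        have h4 : (|lam|⁻¹)^M * |coordA eu es p| * nrm eu
            ≤ (|lam|⁻¹)^M * (A * nrm eu) := by
          calc (|lam|⁻¹)^M * |coordA eu es p| * nrm eu
              ≤ (|lam|⁻¹)^M * A * nrm eu :=
                mul_le_mul_of_nonneg_right
                  (mul_le_mul_of_nonneg_left hap (pow_nonneg hinv_nonneg M)) (nrm_nonneg eu)
          _ = (|lam|⁻¹)^M * (A * nrm eu) := by ring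
        have h5 : |lam|^M * |coordB eu es p| * nrm es
            ≤ |lam| ^ M * (2 * Cb * nrm es) * s n := by
          have hp1 : (0:ℝ) ≤ |lam|^M := pow_nonneg (abs_nonneg lam) M
          calc |lam|^M * |coordB eu es p| * nrm es
              ≤ |lam|^M * (2 * Cb * s n) * nrm es :=
                mul_le_mul_of_nonneg_right
                  (mul_le_mul_of_nonneg_left hbp hp1) (nrm_nonneg es)
          _ = |lam| ^ M * (2 * Cb * nrm es) * s n := by ring
        calc nrm (((lam⁻¹)^M * coordA eu es p) • eu + (lam^M * coordB eu es p) • es)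
            ≤ |(lam⁻¹)^M * coordA eu es p| * nrm eu
              + |lam^M * coordB eu es p| * nrm es := h1
        _ ≤ (|lam|⁻¹)^M * (A * nrm eu) + |lam| ^ M * (2 * Cb * nrm es) * s n := by
            rw [h2, h3]; linarith
        _ < δ'/2 + δ'/2 := by
            have := hMbound; have := hn4; linarith
        _ = δ' := by ring
      -- lower bound
      by_cases hr0 : r = 0
      · have hξ0 : torusProj p = 0 := by
          rw [hp, hr0, Function.iterate_zero_apply, sub_self]
        have hint : IsIntVec p := (torusProj_eq_zero_iff p).mp hξ0
        have hint' : IsIntVec ((minv L)^[M] p) := minv_iter_intvec L M hint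
        have hne' : (minv L)^[M] p ≠ 0 := by
          intro hcon
          have h1 := mact_iter_minv_iter hdet M p
          rw [hcon, Function.iterate_fixed (mact_zero L) M] at h1
          exact hp0 h1.symm
        have h2 := intvec_nrm_ge_one hint' hne'
        have h3 : δ' ≤ 1 := min_le_right _ _
        linarith
      · have hTqξ : (anosovMap L)^[q] ((anosovMap L)^[r] ζ - ζ)
            = (anosovMap L)^[r] ζ - ζ := by
          rw [anosov_iter_sub]
          have hcomm : (anosovMap L)^[q] ((anosovMap L)^[r] ζ)
              = (anosovMap L)^[r] ((anosovMap L)^[q] ζ) := by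
            rw [← Function.iterate_add_apply, ← Function.iterate_add_apply, Nat.add_comm]
          rw [hcomm, hper]
        have hMξ : (anosovMap L)^[M] ((anosovMap L)^[r] ζ - ζ)
            = (anosovMap L)^[r] ζ - ζ := by
          have hgen : ∀ N : ℕ, (anosovMap L)^[q*N] ((anosovMap L)^[r] ζ - ζ)
              = (anosovMap L)^[r] ζ - ζ := by
            intro N
            induction N with
            | zero => simp
            | succ N ihN =>
              rw [Nat.mul_succ, Function.iterate_add_apply, hTqξ, ihN]
          rw [hM]; exact hgen N₀
        have hξ : torusProj ((minv L)^[M] p) = (anosovMap L)^[r] ζ - ζ := by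
          have h1 : (anosovMap L)^[M] (torusProj ((minv L)^[M] p))
              = (anosovMap L)^[r] ζ - ζ := by
            rw [anosov_iter_proj, mact_iter_minv_iter hdet, hp]
          exact ((anosov_inj hdet).iterate M) (h1.trans hMξ.symm)
        have hlow : δ' ≤ nrm ((minv L)^[M] p) := by
          have h1 : dEuc ((anosovMap L)^[r] ζ - ζ) 0 ≤ nrm ((minv L)^[M] p) :=
            dEuc_le_nrm (by rw [hξ, sub_zero])
          have h2 := hδ r (by omega) hrq
          calc δ' ≤ δ := min_le_left _ _
          _ ≤ dEuc ((anosovMap L)^[r] ζ - ζ) 0 := h2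
          _ ≤ nrm ((minv L)^[M] p) := h1
        linarith
  refine ⟨key, ?_⟩
  apply Finset.sum_eq_zero
  intro j hj
  rw [Finset.mem_Icc] at hj
  have hj2 : (j:ℤ) ≤ q * g n := by
    rcases le_or_gt 0 (g n) with hg0 | hg0
    · calc (j:ℤ) ≤ ((q * (g n).toNat : ℕ) : ℤ) := by exact_mod_cast hj.2
      _ = q * g n := by push_cast [Int.toNat_of_nonneg hg0]; ring
    · exfalso
      have h1 : (g n).toNat = 0 := Int.toNat_of_nonpos hg0.le
      rw [h1, Nat.mul_zero] at hj
      omega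
  rw [key j hj.1 hj2]
  simp
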